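/- Fixed point implies stationarity (interior case): let p ∈ (0,1), c ∈ (0,1), r > 0, β > 0, f differentiable, and x with ‖x‖_p^p < r. With ε, r' defined as in the algorithm (ε = c((r−‖x‖_p^p)/(|A(x)|+1))^(1/p), r' = (1/p)(r + (p−1)‖x‖_p^p − |A(x)|ε^p)), suppose x minimizes φ(y) = f(x) + ⟨∇f(x), y−x⟩ + (β/2)‖y−x‖² over {y : ∑_{i∈I(x)}|xᵢ|^(p−1)|yᵢ| + ∑_{i∈A(x)} ε^(p−1)|yᵢ| ≤ r'}. Then ∇f(x) = 0. -/

import Mathlib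

open Finset

set_option maxHeartbeats 2000000 in

theorem fixed_point_stationary_interior (n : ℕ) (p r c β : ℝ)
    (hp0 : 0 < p) (hp1 : p < 1) (hr : 0 < r) (hc0 : 0 < c) (hc1 : c < 1) (hβ : 0 < β)
    (f : EuclideanSpace ℝ (Fin n) → ℝ) (hf : Differentiable ℝ f)
    (x : EuclideanSpace ℝ (Fin n)) (hx : ∑ i, |x i| ^ p < r)
    (A : ℕ) (hA : A = (Finset.univ.filter (fun i => x i = 0)).card)
    (ε : ℝ) (hε : ε = c * ((r - ∑ i, |x i| ^ p) / (A + 1)) ^ (1 / p))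
    (r' : ℝ) (hr' : r' = (1 / p) * (r + (p - 1) * (∑ i, |x i| ^ p) - A * ε ^ p))
    (S : Set (EuclideanSpace ℝ (Fin n)))
    (hS : S = {y | ∑ i ∈ Finset.univ.filter (fun i => x i ≠ 0), |x i| ^ (p - 1) * |y i|
        + ∑ i ∈ Finset.univ.filter (fun i => x i = 0), ε ^ (p - 1) * |y i| ≤ r'})
    (hmin : ∀ y ∈ S,
      f x + (inner ℝ (gradient f x) (x - x) : ℝ) + β / 2 * ‖x - x‖ ^ 2 ≤
        f x + (inner ℝ (gradient f x) (y - x) : ℝ) + β / 2 * ‖y - x‖ ^ 2) :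
    gradient f x = 0 := by
  set g := gradient f x with hg
  clear_value g
  set T := ∑ i, |x i| ^ p with hT
  have hpne : p ≠ 0 := ne_of_gt hp0
  have hrT : 0 < r - T := by linarith
  have hA1 : (0:ℝ) < (A:ℝ) + 1 := by positivity
  have hs : (0:ℝ) < (r - T) / (A + 1) := by positivity
  have hεp : ε ^ p = c ^ p * ((r - T) / (A + 1)) := by
    rw [hε, Real.mul_rpow hc0.le (Real.rpow_nonneg hs.le _),
      ← Real.rpow_mul hs.le, one_div, inv_mul_cancel₀ hpne, Real.rpow_one]
  have hcp : c ^ p < 1 := Real.rpow_lt_one hc0.le hc1 hp0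
  have hcp0 : 0 ≤ c ^ p := Real.rpow_nonneg hc0.le _
  have hAε : (A:ℝ) * ε ^ p < r - T := by
    rw [hεp]
    have h1 : (A:ℝ) * c ^ p < (A:ℝ) + 1 := by
      nlinarith [Nat.cast_nonneg (α := ℝ) A]
    calc (A:ℝ) * (c ^ p * ((r - T) / (A + 1)))
        = ((A:ℝ) * c ^ p) * ((r - T) / (A + 1)) := by ring
      _ < ((A:ℝ) + 1) * ((r - T) / (A + 1)) := by
          exact mul_lt_mul_of_pos_right h1 hs
      _ = r - T := by field_simp
  have hTr' : T < r' := by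
    rw [hr']
    have h : p * T < p * ((1/p) * (r + (p-1) * T - A * ε ^ p)) := by
      rw [← mul_assoc, mul_one_div, div_self hpne, one_mul]
      nlinarith
    exact lt_of_mul_lt_mul_left h hp0.le
  -- sums restricted
  have hεpos : 0 < ε := by
    rw [hε]; positivity
  have hTeq : T = ∑ i ∈ Finset.univ.filter (fun i => x i ≠ 0), |x i| ^ (p-1) * |x i| := by
    rw [hT, ← Finset.sum_filter_add_sum_filter_not Finset.univ (fun i => x i ≠ 0)
      (fun i => |x i| ^ p)]
    have h2 : ∑ i ∈ Finset.univ.filter (fun i => ¬ x i ≠ 0), |x i| ^ p = 0 := by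
      apply Finset.sum_eq_zero
      intro i hi
      simp only [Finset.mem_filter, not_not] at hi
      rw [hi.2, abs_zero, Real.zero_rpow hpne]
    rw [h2, add_zero]
    apply Finset.sum_congr rfl
    intro i hi
    simp only [Finset.mem_filter] at hi
    have hxi : 0 < |x i| := abs_pos.mpr hi.2
    have h : |x i| ^ p = |x i| ^ (p-1) * |x i| ^ (1:ℝ) := by
      rw [← Real.rpow_add hxi]; norm_num
    rw [h, Real.rpow_one]
  set M := (∑ i ∈ Finset.univ.filter (fun i => x i ≠ 0), |x i| ^ (p-1) * |g i|)
    + ∑ i ∈ Finset.univ.filter (fun i => x i = 0), ε ^ (p-1) * |g i| with hM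
  clear_value M
  have hM0 : 0 ≤ M := by
    rw [hM]
    apply add_nonneg <;> apply Finset.sum_nonneg <;> intro i hi <;>
      apply mul_nonneg (Real.rpow_nonneg (by positivity) _) (abs_nonneg _)
  set t := min ((r' - T)/(M+1)) (1/β) with ht
  have ht0 : 0 < t := by
    apply lt_min
    · exact div_pos (by linarith) (by linarith)
    · positivity
  have ht1 : t ≤ (r' - T)/(M+1) := min_le_left _ _
  have htβ : t ≤ 1/β := min_le_right _ _
  clear_value t
  set y : EuclideanSpace ℝ (Fin n) := x - t • g with hy
  have hyi : ∀ i, y i = x i - t * g i := by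
    intro i; simp [hy]
  clear_value y
  have hyS : y ∈ S := by
    rw [hS]
    simp only [Set.mem_setOf_eq]
    have keyI : ∑ i ∈ Finset.univ.filter (fun i => x i ≠ 0), |x i| ^ (p - 1) * |y i|
        ≤ (∑ i ∈ Finset.univ.filter (fun i => x i ≠ 0), |x i| ^ (p-1) * |x i|)
          + t * ∑ i ∈ Finset.univ.filter (fun i => x i ≠ 0), |x i| ^ (p-1) * |g i| := by
      rw [Finset.mul_sum, ← Finset.sum_add_distrib]
      apply Finset.sum_le_sum
      intro i hi
      have h1 : |y i| ≤ |x i| + t * |g i| := by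
        rw [hyi i, sub_eq_add_neg]
        calc |x i + -(t * g i)| ≤ |x i| + |-(t * g i)| := abs_add_le _ _
          _ = |x i| + t * |g i| := by rw [abs_neg, abs_mul, abs_of_pos ht0]
      have h2 : (0:ℝ) ≤ |x i| ^ (p-1) := Real.rpow_nonneg (abs_nonneg _) _
      nlinarith [mul_le_mul_of_nonneg_left h1 h2]
    have keyA : ∑ i ∈ Finset.univ.filter (fun i => x i = 0), ε ^ (p - 1) * |y i|
        ≤ t * ∑ i ∈ Finset.univ.filter (fun i => x i = 0), ε ^ (p-1) * |g i| := by
      rw [Finset.mul_sum]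
      apply Finset.sum_le_sum
      intro i hi
      simp only [Finset.mem_filter] at hi
      have h1 : |y i| = t * |g i| := by
        rw [hyi i, hi.2, zero_sub, abs_neg, abs_mul, abs_of_pos ht0]
      rw [h1]; exact le_of_eq (by ring)
    have key : ∑ i ∈ Finset.univ.filter (fun i => x i ≠ 0), |x i| ^ (p - 1) * |y i|
        + ∑ i ∈ Finset.univ.filter (fun i => x i = 0), ε ^ (p - 1) * |y i|
        ≤ T + t * M := by
      rw [hTeq, hM, mul_add]
      linarith
    have hMle : t * M ≤ r' - T := by
      have h1 := ht1
      calc t * M ≤ (r' - T)/(M+1) * M := by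
            apply mul_le_mul_of_nonneg_right h1 hM0
        _ ≤ r' - T := by
            rw [div_mul_eq_mul_div, div_le_iff₀ (by linarith)]
            nlinarith
    linarith
  have hkey := hmin y hyS
  have h1 : y - x = -(t • g) := by rw [hy]; abel
  have h2 : (inner ℝ g (y - x) : ℝ) = -(t * ‖g‖^2) := by
    rw [h1, inner_neg_right, real_inner_smul_right, real_inner_self_eq_norm_sq]
  have h3 : ‖y - x‖^2 = t^2 * ‖g‖^2 := by
    rw [h1, norm_neg, norm_smul, Real.norm_eq_abs, abs_of_pos ht0, mul_pow]
  simp only [sub_self, inner_zero_right, norm_zero] at hkey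
  rw [h2, h3] at hkey
  have htβ' : t * β ≤ 1 := by
    rw [← le_div_iff₀ hβ]; exact htβ
  have hng : ‖g‖^2 ≤ 0 := by
    by_contra h
    push_neg at h
    have h4 : 0 < t * ‖g‖^2 := mul_pos ht0 h
    have h5 : t * β * (t * ‖g‖^2) ≤ 1 * (t * ‖g‖^2) :=
      mul_le_mul_of_nonneg_right htβ' h4.le
    nlinarith
  have : ‖g‖ = 0 := by nlinarith [norm_nonneg g, sq_nonneg ‖g‖]
  exact norm_eq_zero.mp this
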